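/- Suppose |S| ≥ |T| ≥ 2. For every ε ∈ (0,1] there exists a nonempty open subset O ⊆ Δ(S)^T (product topology) such that every tuple π = (π(t))_{t∈T} ∈ O satisfies convex independence, and for the ε-contaminated beliefs Π_ε every incentive compatible menu c : T → ℝ^S satisfies c(t) = c(t') for all t, t' ∈ T. -/

import Mathlib

noncomputable section

/-- Euclidean inner product on ℝ^S. -/
def dotp {S : Type*} [Fintype S] (x y : S → ℝ) : ℝ := ∑ s, x s * y s

/-- The ε-contamination of the point beliefs `p`. -/
def contaminated {S T : Type*} [Fintype S] (p : T → (S → ℝ)) (ε : ℝ) (t : T) :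
    Set (S → ℝ) :=
  {x | ∃ q ∈ stdSimplex ℝ S, x = (1 - ε) • p t + ε • q}

/-- There is a nonempty open subset of `Δ(S)^T` (product topology) of point beliefs satisfying
convex independence such that for the ε-contaminated beliefs any incentive compatible menu is
constant.  Relatively open subsets of `Δ(S)^T` are exactly intersections of open subsets of the
ambient product space with `Δ(S)^T`. -/
theorem stmt_13 {S T : Type*} [Fintype S] [Fintype T] [Nonempty S] [Nonempty T]
    (hST : Fintype.card T ≤ Fintype.card S) (hT : 2 ≤ Fintype.card T)
    (ε : ℝ) (hε0 : 0 < ε) (hε1 : ε ≤ 1) :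
    ∃ U : Set (T → (S → ℝ)), IsOpen U ∧
      (∃ p ∈ U, ∀ t, p t ∈ stdSimplex ℝ S) ∧
      ∀ p ∈ U, (∀ t, p t ∈ stdSimplex ℝ S) →
        ((∀ t : T, p t ∉ closure (convexHull ℝ (p '' {s | s ≠ t}))) ∧
          ∀ c : T → (S → ℝ),
            (∀ t s : T, ∀ π ∈ contaminated p ε t, dotp π (c t) ≤ dotp π (c s)) →
            ∀ t t' : T, c t = c t') := by
  classical
  obtain ⟨ι⟩ : Nonempty (T ↪ S) := Function.Embedding.nonempty_of_card_le hST
  have h1ε : (0:ℝ) ≤ 1 - ε := by linarith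
  set U : Set (T → (S → ℝ)) :=
    {q | (∀ t s : T, s ≠ t → q s (ι t) < q t (ι t)) ∧
      (∀ t s : T, (1 - ε) * ∑ i, |q t i - q s i| < ε)} with hU
  refine ⟨U, ?_, ?_, ?_⟩
  · -- openness
    have e1 : ∀ (t s : T), Continuous fun q : T → S → ℝ => q s (ι t) := fun t s =>
      (continuous_apply (ι t)).comp (continuous_apply s)
    have hsplit : U = (⋂ t, ⋂ s, {q : T → S → ℝ | s ≠ t → q s (ι t) < q t (ι t)}) ∩
        (⋂ t, ⋂ s, {q : T → S → ℝ | (1 - ε) * ∑ i, |q t i - q s i| < ε}) := by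
      ext q; simp [hU, Set.mem_iInter]
    rw [hsplit]
    refine IsOpen.inter ?_ ?_
    · refine isOpen_iInter_of_finite fun t => isOpen_iInter_of_finite fun s => ?_
      by_cases h : s = t
      · convert isOpen_univ using 1
        ext q; simp [h]
      · have hset : {q : T → S → ℝ | s ≠ t → q s (ι t) < q t (ι t)} =
            {q : T → S → ℝ | q s (ι t) < q t (ι t)} := by
          ext q; simp [h]
        rw [hset]
        exact isOpen_lt (e1 t s) (e1 t t)
    · refine isOpen_iInter_of_finite fun t => isOpen_iInter_of_finite fun s => ?_
      have hc : Continuous fun q : T → S → ℝ => (1 - ε) * ∑ i, |q t i - q s i| := by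
        refine continuous_const.mul (continuous_finset_sum _ fun i _ => ?_)
        exact (((continuous_apply i).comp (continuous_apply t)).sub
          (continuous_apply_apply s i)).abs
      exact isOpen_lt hc continuous_const
  · -- nonempty: a concrete point
    set η : ℝ := ε / 4 with hη
    have hη0 : 0 < η := by positivity
    have hη1 : η ≤ 1 / 4 := by rw [hη]; linarith
    have hcS : 0 < (Fintype.card S : ℝ) := by exact_mod_cast Fintype.card_pos
    set p : T → S → ℝ := fun t i =>
      (1 - η) * (Fintype.card S : ℝ)⁻¹ + η * (if i = ι t then 1 else 0) with hp
    refine ⟨p, ⟨?_, ?_⟩, ?_⟩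
    · intro t s hst
      have hne : ¬ (ι t = ι s) := fun h => hst (ι.injective h.symm)
      simp only [hp]
      simp [hne]
      positivity
    · intro t s
      by_cases hst : s = t
      · subst hst; simp; linarith
      · have hne : ι t ≠ ι s := fun h => hst (ι.injective h.symm)
        have habs : ∀ i, |p t i - p s i| =
            η * (if i = ι t then 1 else 0) + η * (if i = ι s then 1 else 0) := by
          intro i
          have hd : p t i - p s i =
              η * ((if i = ι t then 1 else 0) - (if i = ι s then 1 else 0)) := by
            simp only [hp]; ring
          rw [hd]
          by_cases h1 : i = ι t <;> by_cases h2 : i = ι s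
          · exact absurd (h1 ▸ h2) hne
          · rw [if_pos h1, if_neg h2]
            norm_num [abs_of_nonneg hη0.le]
          · rw [if_neg h1, if_pos h2]
            rw [show η * ((0:ℝ) - 1) = -η by ring, abs_neg, abs_of_nonneg hη0.le]
            ring
          · rw [if_neg h1, if_neg h2]
            norm_num
        have hsum : ∑ i, |p t i - p s i| = 2 * η := by
          simp only [habs]
          rw [Finset.sum_add_distrib]
          simp [mul_ite, Finset.sum_ite_eq']
          ring
        rw [hsum]
        nlinarith
    · intro t
      constructor
      · intro i
        have hbase : (0:ℝ) ≤ (1 - η) * (Fintype.card S : ℝ)⁻¹ :=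
          mul_nonneg (by linarith) (by positivity)
        simp only [hp]
        split_ifs <;> linarith
      · simp only [hp]
        rw [Finset.sum_add_distrib]
        simp [mul_ite, Finset.sum_ite_eq', Finset.sum_const, Finset.card_univ]
        field_simp
        ring
  · -- main part
    rintro q ⟨h1, h2⟩ hq
    constructor
    · -- convex independence
      intro t hmem
      have hTne : ({s : T | s ≠ t}).Nonempty := by
        obtain ⟨s, s', hss'⟩ := Fintype.exists_pair_of_one_lt_card (α := T) (by omega)
        rcases eq_or_ne s t with rfl | h
        · exact ⟨s', hss'.symm⟩
        · exact ⟨s, h⟩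
      obtain ⟨s₀, hs₀⟩ := hTne
      set Fin' : Finset T := Finset.univ.erase t with hFin
      have hFne : Fin'.Nonempty := ⟨s₀, Finset.mem_erase.mpr ⟨hs₀, Finset.mem_univ _⟩⟩
      set M : ℝ := Fin'.sup' hFne (fun s => q s (ι t)) with hM
      have hMlt : M < q t (ι t) := by
        rw [hM, Finset.sup'_lt_iff]
        intro s hs
        exact h1 t s (Finset.mem_erase.mp hs).1
      have hsub : q '' {s | s ≠ t} ⊆ {x : S → ℝ | x (ι t) ≤ M} := by
        rintro x ⟨s, hs, rfl⟩
        exact Finset.le_sup' (fun s => q s (ι t))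
          (Finset.mem_erase.mpr ⟨hs, Finset.mem_univ _⟩)
      have hcvx : Convex ℝ {x : S → ℝ | x (ι t) ≤ M} :=
        convex_halfSpace_le (f := fun x : S → ℝ => x (ι t)) ⟨fun _ _ => rfl, fun _ _ => rfl⟩ M
      have hcl : IsClosed {x : S → ℝ | x (ι t) ≤ M} :=
        isClosed_le (continuous_apply (ι t)) continuous_const
      have := closure_minimal (convexHull_min hsub hcvx) hcl hmem
      simp only [Set.mem_setOf_eq] at this
      linarith
    · intro c hc t t'
      set d : S → ℝ := fun i => c t i - c t' i with hd
      -- key inequality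
      have key : ∀ (a b : T) (j : S),
          (1 - ε) * (∑ i, q a i * (c a i - c b i)) + ε * (c a j - c b j) ≤ 0 := by
        intro a b j
        set v : S → ℝ := fun i => if i = j then 1 else 0 with hv
        have hvmem : v ∈ stdSimplex ℝ S := by
          constructor
          · intro i; simp only [hv]; split <;> norm_num
          · simp [hv, Finset.sum_ite_eq']
        set π : S → ℝ := fun i => (1 - ε) * q a i + ε * v i with hπ
        have hπmem : π ∈ contaminated q ε a := ⟨v, hvmem, rfl⟩
        have hineq := hc a b π hπmem
        have expand : ∀ x : S → ℝ, dotp π x = (1 - ε) * (∑ i, q a i * x i) + ε * x j := by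
          intro x
          have : ∀ i, π i * x i = (1 - ε) * (q a i * x i) +
              (if i = j then ε * x i else 0) := by
            intro i
            by_cases h : i = j <;> simp [hπ, hv, h] <;> ring
          rw [dotp, Finset.sum_congr rfl fun i _ => this i, Finset.sum_add_distrib,
            Finset.sum_ite_eq']
          simp [Finset.mul_sum]
        rw [expand, expand] at hineq
        have hsplit : ∑ i, q a i * (c a i - c b i) =
            (∑ i, q a i * c a i) - ∑ i, q a i * c b i := by
          rw [← Finset.sum_sub_distrib]
          exact Finset.sum_congr rfl fun i _ => by ring
        rw [hsplit]
        linarith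
      obtain ⟨s₁, _, hs₁⟩ := Finset.exists_max_image Finset.univ d Finset.univ_nonempty
      obtain ⟨s₀, _, hs₀⟩ := Finset.exists_min_image Finset.univ d Finset.univ_nonempty
      set M : ℝ := d s₁ with hMdef
      set m : ℝ := d s₀ with hmdef
      have hMd : ∀ i, d i ≤ M := fun i => hs₁ i (Finset.mem_univ i)
      have hmd : ∀ i, m ≤ d i := fun i => hs₀ i (Finset.mem_univ i)
      have hmM : m ≤ M := hmd s₁
      set A : ℝ := ∑ i, q t i * d i with hA
      set B : ℝ := ∑ i, q t' i * d i with hB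
      have key1 : (1 - ε) * A + ε * M ≤ 0 := key t t' s₁
      have key2 : (1 - ε) * (-B) + ε * (-m) ≤ 0 := by
        have h := key t' t s₀
        have hrw : (∑ i, q t' i * (c t' i - c t i)) = -B := by
          rw [hB, ← Finset.sum_neg_distrib]
          exact Finset.sum_congr rfl fun i _ => by simp [hd]; ring
        rw [hrw] at h
        have : c t' s₀ - c t s₀ = -m := by simp [hmdef, hd]
        rw [this] at h
        exact h
      have hsum1 : ∑ i, q t i = 1 := (hq t).2
      have hsum2 : ∑ i, q t' i = 1 := (hq t').2
      set D : ℝ := ∑ i, |q t i - q t' i| with hD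
      have hDlt : (1 - ε) * D < ε := h2 t t'
      have hAB : -(D * (M - m)) ≤ A - B := by
        have step : ∀ i, -(|q t i - q t' i| * (M - m)) ≤ (q t i - q t' i) * (d i - m) := by
          intro i
          have h1' := hmd i
          have h2' := hMd i
          have h3' := abs_nonneg (q t i - q t' i)
          have h4' := neg_abs_le (q t i - q t' i)
          have h5' := le_abs_self (q t i - q t' i)
          nlinarith
        have hsum : ∑ i, -(|q t i - q t' i| * (M - m)) ≤
            ∑ i, (q t i - q t' i) * (d i - m) :=
          Finset.sum_le_sum fun i _ => step i
        have lhs : ∑ i, -(|q t i - q t' i| * (M - m)) = -(D * (M - m)) := by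
          rw [Finset.sum_neg_distrib, hD, Finset.sum_mul]
        have rhs : ∑ i, (q t i - q t' i) * (d i - m) = A - B := by
          have expand : ∀ i, (q t i - q t' i) * (d i - m) =
              (q t i * d i - q t' i * d i) - (m * q t i - m * q t' i) := by
            intro i; ring
          rw [Finset.sum_congr rfl fun i _ => expand i, Finset.sum_sub_distrib,
            Finset.sum_sub_distrib, Finset.sum_sub_distrib, ← Finset.mul_sum,
            ← Finset.mul_sum, hsum1, hsum2, hA, hB]
          ring
        rw [lhs, rhs] at hsum
        exact hsum
      have hDnn : 0 ≤ D := Finset.sum_nonneg fun i _ => abs_nonneg _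
      have hMm : M = m := by
        by_contra h
        have hlt : 0 < M - m := lt_of_le_of_ne (by linarith) (fun hh => h (by linarith))
        nlinarith [mul_le_mul_of_nonneg_left hAB h1ε, mul_lt_mul_of_pos_right hDlt hlt]
      have hdconst : ∀ i, d i = m := fun i => le_antisymm (hMm ▸ hMd i) (hmd i)
      have hAm : A = m := by
        rw [hA, Finset.sum_congr rfl fun i _ => by rw [hdconst i], ← Finset.sum_mul, hsum1]
        ring
      have hBm : B = m := by
        rw [hB, Finset.sum_congr rfl fun i _ => by rw [hdconst i], ← Finset.sum_mul, hsum2]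
        ring
      have hm0 : m = 0 := by
        rw [hAm, hMm] at key1
        rw [hBm] at key2
        linarith
      funext i
      have := hdconst i
      rw [hm0] at this
      simp only [hd] at this
      linarith
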